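/- (Unconditional energy dissipation for the sweeping dimensional splitting scheme S2.) Let N ≥ 2, Δx, Δy, Δt > 0, H : ℝ → ℝ convex and differentiable, V ∈ ℝ^{N×N}, and w : ℤ² → ℝ with w(p,q) = w(−p,q) = w(p,−q). Consider the sweeping S2 scheme: an x-sweep ρ^{n,(0)} = ρⁿ, …, ρ^{n,(N)} = ρ^{n+1/2} in which at stage r only row j = r is updated via ρ^{n,(r)}_{i,r} = ρ^{n,(r−1)}_{i,r} − (Δt/Δx)(F^{(r)}_{i+1/2,r} − F^{(r)}_{i−1/2,r}), with F^{(r)}_{i+1/2,r} = ρ^{n,(r)}_{i,r}(u^{(r)}_{i+1/2,r})⁺ + ρ^{n,(r)}_{i+1,r}(u^{(r)}_{i+1/2,r})⁻ (zero boundary fluxes), u^{(r)}_{i+1/2,r} = −(ξ^{(r)}_{i+1,r} − ξ^{(r)}_{i,r})/Δx, ξ^{(r)}_{i,j} = H'(ρ^{n,(r)}_{i,j}) + V_{ij} + ΔxΔy·∑_{k,l} w(i−k,j−l)·ρ̂^{(r)}_{k,l}, where ρ̂^{(r)}_{k,l} = ρ^{**,(r)}_{k,l} if l = r and ρ̂^{(r)}_{k,l}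 = ρ^{n,(r−1)}_{k,l} otherwise; followed by an analogous column-by-column y-sweep ρ^{n+1/2,(0)} = ρ^{n+1/2}, …, ρ^{n+1/2,(N)} = ρⁿ⁺¹ with fluxes built from the implicit column values and convolution variable equal to ρ^{***,(r)} on column k = r and ρ^{n+1/2,(r−1)} elsewhere. Assume ρⁿ has nonnegative entries (so all iterates are nonnegative by the unconditional positivity of S2). If for every r one of the following holds: (i) ρ^{**,(r)} = (ρ^{n,(r)} + ρ^{n,(r−1)})/2 and ρ^{***,(r)} = (ρ^{n+1/2,(r)} + ρ^{n+1/2,(r−1)})/2 (any kernel); (ii) ρ^{**,(r)} = ρ^{n,(r−1)} and ρ^{***,(r)} = ρ^{n+1/2,(r−1)} and the kernel w is negative definite; (iii) ρ^{**,(r)} = ρ^{n,(r)} and ρ^{***,(r)} = ρ^{n+1/2,(r)} and the kernel w is positive definite; then E_Δ(ρⁿ⁺¹) ≤ E_Δ(ρⁿ), with no CFL restriction; indeed the discrete energy decreases at every individual stage of both sweeps. -/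

import Mathlib

/-- Positive part `z⁺ = max(z,0)`. -/
noncomputable def pospart (z : ℝ) : ℝ := max z 0

/-- Negative part `z⁻ = min(z,0)`. -/
noncomputable def negpart (z : ℝ) : ℝ := min z 0

/-- The two-dimensional discrete free energy
`E_Δ(ρ) = ΔxΔy·(∑ H(ρ_{ij}) + ∑ V_{ij}ρ_{ij} + (ΔxΔy/2)·∑ w(i−k,j−l)ρ_{ij}ρ_{kl})`. -/
noncomputable def Edisc2 (N : ℕ) (dx dy : ℝ) (H : ℝ → ℝ) (V : ℕ → ℕ → ℝ)
    (w : ℤ → ℤ → ℝ) (ρ : ℕ → ℕ → ℝ) : ℝ :=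
  dx * dy * ((∑ i ∈ Finset.Icc 1 N, ∑ j ∈ Finset.Icc 1 N, H (ρ i j))
    + (∑ i ∈ Finset.Icc 1 N, ∑ j ∈ Finset.Icc 1 N, V i j * ρ i j)
    + dx * dy / 2 * ∑ i ∈ Finset.Icc 1 N, ∑ j ∈ Finset.Icc 1 N,
        ∑ k ∈ Finset.Icc 1 N, ∑ l ∈ Finset.Icc 1 N,
          w ((i : ℤ) - (k : ℤ)) ((j : ℤ) - (l : ℤ)) * ρ i j * ρ k l)

/-- The kernel `w` is negative definite: `∑ w(i−k,j−l)(a_{ij}−b_{ij})(a_{kl}−b_{kl}) ≤ 0`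
for all matrices `a, b` with nonnegative entries. -/
def NegDefKer2 (N : ℕ) (w : ℤ → ℤ → ℝ) : Prop :=
  ∀ a b : ℕ → ℕ → ℝ,
    (∀ i j, 1 ≤ i → i ≤ N → 1 ≤ j → j ≤ N → 0 ≤ a i j) →
    (∀ i j, 1 ≤ i → i ≤ N → 1 ≤ j → j ≤ N → 0 ≤ b i j) →
    ∑ i ∈ Finset.Icc 1 N, ∑ j ∈ Finset.Icc 1 N,
      ∑ k ∈ Finset.Icc 1 N, ∑ l ∈ Finset.Icc 1 N,
        w ((i : ℤ) - (k : ℤ)) ((j : ℤ) - (l : ℤ))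
          * (a i j - b i j) * (a k l - b k l) ≤ 0

/-- The kernel `w` is positive definite: `∑ w(i−k,j−l)(a_{ij}−b_{ij})(a_{kl}−b_{kl}) ≥ 0`
for all matrices `a, b` with nonnegative entries. -/
def PosDefKer2 (N : ℕ) (w : ℤ → ℤ → ℝ) : Prop :=
  ∀ a b : ℕ → ℕ → ℝ,
    (∀ i j, 1 ≤ i → i ≤ N → 1 ≤ j → j ≤ N → 0 ≤ a i j) →
    (∀ i j, 1 ≤ i → i ≤ N → 1 ≤ j → j ≤ N → 0 ≤ b i j) →
    0 ≤ ∑ i ∈ Finset.Icc 1 N, ∑ j ∈ Finset.Icc 1 N,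
      ∑ k ∈ Finset.Icc 1 N, ∑ l ∈ Finset.Icc 1 N,
        w ((i : ℤ) - (k : ℤ)) ((j : ℤ) - (l : ℤ))
          * (a i j - b i j) * (a k l - b k l)

lemma pospart_nonneg (z : ℝ) : 0 ≤ pospart z := le_max_right z 0
lemma negpart_nonpos (z : ℝ) : negpart z ≤ 0 := min_le_right z 0

lemma pospart_mul_self (z : ℝ) : pospart z * z = pospart z * pospart z := by
  unfold pospart
  rcases le_total z 0 with h | h
  · rw [max_eq_right h]; ring
  · rw [max_eq_left h]

lemma negpart_mul_self (z : ℝ) : negpart z * z = negpart z * negpart z := by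
  unfold negpart
  rcases le_total z 0 with h | h
  · rw [min_eq_left h]
  · rw [min_eq_right h]; ring

lemma tele_Icc (F : ℕ → ℝ) (p q : ℕ) (hpq : p ≤ q) :
    ∑ i ∈ Finset.Icc p q, (F i - F (i - 1)) = F q - F (p - 1) := by
  induction q, hpq using Nat.le_induction with
  | base => simp
  | succ n hn ih =>
    rw [Finset.sum_Icc_succ_top (by omega), ih]
    simp

lemma abel_Icc (ξ F : ℕ → ℝ) (N : ℕ) (hN : 1 ≤ N) :
    ∑ i ∈ Finset.Icc 1 N, ξ i * (F i - F (i - 1)) =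
      ξ N * F N - ξ 1 * F 0 + ∑ i ∈ Finset.Icc 1 (N - 1), (ξ i - ξ (i + 1)) * F i := by
  induction N, hN using Nat.le_induction with
  | base => simp; ring
  | succ n hn ih =>
    obtain ⟨m, rfl⟩ : ∃ m, n = m + 1 := ⟨n - 1, by omega⟩
    rw [Finset.sum_Icc_succ_top (by omega), ih]
    have h2 : ∑ i ∈ Finset.Icc 1 (m + 1 + 1 - 1), (ξ i - ξ (i + 1)) * F i
        = ∑ i ∈ Finset.Icc 1 (m + 1 - 1), (ξ i - ξ (i + 1)) * F i
          + (ξ (m + 1) - ξ (m + 1 + 1)) * F (m + 1) := by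
      have := Finset.sum_Icc_succ_top (f := fun i => (ξ i - ξ (i + 1)) * F i)
        (a := 1) (b := m) (by omega)
      simpa using this
    rw [h2]; simp; ring

lemma convex_tangent (H : ℝ → ℝ) (hc : ConvexOn ℝ Set.univ H) (hd : Differentiable ℝ H)
    (x y : ℝ) : H x - H y ≤ deriv H x * (x - y) := by
  rcases lt_trichotomy x y with h | h | h
  · have h2 := hc.deriv_le_slope (Set.mem_univ x) (Set.mem_univ y) h (hd x)
    rw [slope_def_field, le_div_iff₀ (by linarith)] at h2
    nlinarith
  · subst h; simp
  · have h2 := hc.slope_le_deriv (Set.mem_univ y) (Set.mem_univ x) h (hd x)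
    rw [slope_def_field, div_le_iff₀ (by linarith)] at h2
    nlinarith
lemma row_nonneg (N : ℕ) (hN : 1 ≤ N) (lam : ℝ) (hlam : 0 ≤ lam)
    (ρ β u F : ℕ → ℝ)
    (hβ : ∀ i, 1 ≤ i → i ≤ N → 0 ≤ β i)
    (hF : ∀ i, 1 ≤ i → i ≤ N - 1 → F i = ρ i * pospart (u i) + ρ (i + 1) * negpart (u i))
    (hF0 : F 0 = 0) (hFN : F N = 0)
    (hupd : ∀ i, 1 ≤ i → i ≤ N → ρ i = β i - lam * (F i - F (i - 1))) :
    ∀ i, 1 ≤ i → i ≤ N → 0 ≤ ρ i := by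
  classical
  by_contra hcon
  push_neg at hcon
  obtain ⟨m, hm1, hmN, hm⟩ := hcon
  -- left end of the maximal negative run containing m
  set S : Finset ℕ := (Finset.Icc 1 m).filter (fun p => ∀ i, p ≤ i → i ≤ m → ρ i < 0) with hS
  have hmS : m ∈ S := by
    simp only [hS, Finset.mem_filter, Finset.mem_Icc]
    exact ⟨⟨hm1, le_refl m⟩, fun i h1 h2 => by rwa [le_antisymm h2 h1]⟩
  have hSne : S.Nonempty := ⟨m, hmS⟩
  set p := S.min' hSne with hp
  have hpS : p ∈ S := S.min'_mem hSne
  obtain ⟨hp1m, hprun⟩ : (1 ≤ p ∧ p ≤ m) ∧ ∀ i, p ≤ i → i ≤ m → ρ i < 0 := by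
    have := hpS; simp only [hS, Finset.mem_filter, Finset.mem_Icc] at this; exact this
  obtain ⟨hp1, hpm⟩ := hp1m
  -- right end
  set T : Finset ℕ := (Finset.Icc m N).filter (fun q => ∀ i, m ≤ i → i ≤ q → ρ i < 0) with hT
  have hmT : m ∈ T := by
    simp only [hT, Finset.mem_filter, Finset.mem_Icc]
    exact ⟨⟨le_refl m, hmN⟩, fun i h1 h2 => by rwa [le_antisymm h2 h1]⟩
  have hTne : T.Nonempty := ⟨m, hmT⟩
  set q := T.max' hTne with hq
  have hqT : q ∈ T := T.max'_mem hTne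
  obtain ⟨hq1m, hqrun⟩ : (m ≤ q ∧ q ≤ N) ∧ ∀ i, m ≤ i → i ≤ q → ρ i < 0 := by
    have := hqT; simp only [hT, Finset.mem_filter, Finset.mem_Icc] at this; exact this
  obtain ⟨hmq, hqN⟩ := hq1m
  have hrun : ∀ i, p ≤ i → i ≤ q → ρ i < 0 := by
    intro i h1 h2
    rcases le_or_gt i m with h | h
    · exact hprun i h1 h
    · exact hqrun i h.le h2
  -- left boundary flux nonneg
  have hFp : 0 ≤ F (p - 1) := by
    rcases eq_or_lt_of_le hp1 with h | h
    · rw [← h]; simp [hF0]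
    · -- 2 ≤ p, so ρ (p-1) ≥ 0 by minimality
      have hpm1 : ¬ ρ (p - 1) < 0 := by
        intro hneg
        have hmem : p - 1 ∈ S := by
          simp only [hS, Finset.mem_filter, Finset.mem_Icc]
          refine ⟨⟨by omega, by omega⟩, fun i h1 h2 => ?_⟩
          rcases eq_or_lt_of_le h1 with h' | h'
          · rwa [← h']
          · exact hprun i (by omega) h2
        have := S.min'_le _ hmem
        omega
      push_neg at hpm1
      rw [hF (p - 1) (by omega) (by omega)]
      have h1 : 0 ≤ ρ (p - 1) * pospart (u (p - 1)) :=
        mul_nonneg hpm1 (pospart_nonneg _)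
      have h2 : 0 ≤ ρ (p - 1 + 1) * negpart (u (p - 1)) := by
        have : p - 1 + 1 = p := by omega
        rw [this]
        nlinarith [(hrun p (le_refl p) (le_trans hpm hmq)).le, negpart_nonpos (u (p - 1))]
      linarith
  -- right boundary flux nonpos
  have hFq : F q ≤ 0 := by
    rcases eq_or_lt_of_le hqN with h | h
    · rw [h, hFN]
    · have hq1 : ¬ ρ (q + 1) < 0 := by
        intro hneg
        have hmem : q + 1 ∈ T := by
          simp only [hT, Finset.mem_filter, Finset.mem_Icc]
          refine ⟨⟨by omega, by omega⟩, fun i h1 h2 => ?_⟩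
          rcases eq_or_lt_of_le h2 with h' | h'
          · rwa [h']
          · exact hqrun i h1 (by omega)
        have := T.le_max' _ hmem
        omega
      push_neg at hq1
      rw [hF q (by omega) (by omega)]
      have h1 : ρ q * pospart (u q) ≤ 0 :=
        mul_nonpos_of_nonpos_of_nonneg (hrun q (hpm.trans hmq) (le_refl q)).le (pospart_nonneg _)
      have h2 : ρ (q + 1) * negpart (u q) ≤ 0 :=
        mul_nonpos_of_nonneg_of_nonpos hq1 (negpart_nonpos _)
      linarith
  -- sum over the run
  have hsum : ∑ i ∈ Finset.Icc p q, ρ i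
      = ∑ i ∈ Finset.Icc p q, β i - lam * (F q - F (p - 1)) := by
    have h1 : ∑ i ∈ Finset.Icc p q, ρ i
        = ∑ i ∈ Finset.Icc p q, (β i - lam * (F i - F (i - 1))) := by
      refine Finset.sum_congr rfl fun i hi => ?_
      rw [Finset.mem_Icc] at hi
      exact hupd i (by omega) (by omega)
    rw [h1, Finset.sum_sub_distrib, ← Finset.mul_sum, tele_Icc F p q (hpm.trans hmq)]
  have hβsum : 0 ≤ ∑ i ∈ Finset.Icc p q, β i :=
    Finset.sum_nonneg fun i hi => by
      rw [Finset.mem_Icc] at hi; exact hβ i (by omega) (by omega)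
  have hneg : ∑ i ∈ Finset.Icc p q, ρ i < 0 := by
    refine Finset.sum_neg (fun i hi => ?_) ⟨m, Finset.mem_Icc.2 ⟨hpm, hmq⟩⟩
    rw [Finset.mem_Icc] at hi
    exact hrun i hi.1 hi.2
  have : lam * (F q - F (p - 1)) ≤ 0 :=
    mul_nonpos_of_nonneg_of_nonpos hlam (by linarith)
  linarith

lemma sum2_congr (s : Finset ℕ) (f g : ℕ → ℕ → ℝ)
    (h : ∀ i ∈ s, ∀ j ∈ s, f i j = g i j) :
    ∑ i ∈ s, ∑ j ∈ s, f i j = ∑ i ∈ s, ∑ j ∈ s, g i j :=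
  Finset.sum_congr rfl fun i hi => Finset.sum_congr rfl fun j hj => h i hi j hj

lemma sum4_congr (s : Finset ℕ) (f g : ℕ → ℕ → ℕ → ℕ → ℝ)
    (h : ∀ i ∈ s, ∀ j ∈ s, ∀ k ∈ s, ∀ l ∈ s, f i j k l = g i j k l) :
    ∑ i ∈ s, ∑ j ∈ s, ∑ k ∈ s, ∑ l ∈ s, f i j k l
      = ∑ i ∈ s, ∑ j ∈ s, ∑ k ∈ s, ∑ l ∈ s, g i j k l :=
  Finset.sum_congr rfl fun i hi => Finset.sum_congr rfl fun j hj =>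
    Finset.sum_congr rfl fun k hk => Finset.sum_congr rfl fun l hl => h i hi j hj k hk l hl

lemma sum4_pairswap (s : Finset ℕ) (f : ℕ → ℕ → ℕ → ℕ → ℝ) :
    ∑ i ∈ s, ∑ j ∈ s, ∑ k ∈ s, ∑ l ∈ s, f i j k l
      = ∑ i ∈ s, ∑ j ∈ s, ∑ k ∈ s, ∑ l ∈ s, f j i l k := by
  rw [Finset.sum_comm]
  exact Finset.sum_congr rfl fun j _ => Finset.sum_congr rfl fun i _ => Finset.sum_comm

lemma sum4_swap (s : Finset ℕ) (f : ℕ → ℕ → ℕ → ℕ → ℝ) :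
    ∑ i ∈ s, ∑ j ∈ s, ∑ k ∈ s, ∑ l ∈ s, f i j k l
      = ∑ i ∈ s, ∑ j ∈ s, ∑ k ∈ s, ∑ l ∈ s, f k l i j := by
  have step1 : ∑ i ∈ s, ∑ j ∈ s, ∑ k ∈ s, ∑ l ∈ s, f i j k l
      = ∑ i ∈ s, ∑ k ∈ s, ∑ j ∈ s, ∑ l ∈ s, f i j k l :=
    Finset.sum_congr rfl fun i _ => Finset.sum_comm
  have step2 : ∑ i ∈ s, ∑ k ∈ s, ∑ j ∈ s, ∑ l ∈ s, f i j k l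
      = ∑ k ∈ s, ∑ i ∈ s, ∑ j ∈ s, ∑ l ∈ s, f i j k l := Finset.sum_comm
  have step3 : ∑ k ∈ s, ∑ i ∈ s, ∑ j ∈ s, ∑ l ∈ s, f i j k l
      = ∑ k ∈ s, ∑ i ∈ s, ∑ l ∈ s, ∑ j ∈ s, f i j k l :=
    Finset.sum_congr rfl fun k _ => Finset.sum_congr rfl fun i _ => Finset.sum_comm
  have step4 : ∑ k ∈ s, ∑ i ∈ s, ∑ l ∈ s, ∑ j ∈ s, f i j k l
      = ∑ k ∈ s, ∑ l ∈ s, ∑ i ∈ s, ∑ j ∈ s, f i j k l :=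
    Finset.sum_congr rfl fun k _ => Finset.sum_comm
  rw [step1, step2, step3, step4]

/-- quadratic form -/
noncomputable def Qf (N : ℕ) (w : ℤ → ℤ → ℝ) (x y : ℕ → ℕ → ℝ) : ℝ :=
  ∑ i ∈ Finset.Icc 1 N, ∑ j ∈ Finset.Icc 1 N, ∑ k ∈ Finset.Icc 1 N, ∑ l ∈ Finset.Icc 1 N,
    w ((i : ℤ) - (k : ℤ)) ((j : ℤ) - (l : ℤ)) * x i j * y k l

lemma Qf_symm (N : ℕ) (w : ℤ → ℤ → ℝ)
    (hw1 : ∀ p q : ℤ, w (-p) q = w p q) (hw2 : ∀ p q : ℤ, w p (-q) = w p q)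
    (x y : ℕ → ℕ → ℝ) : Qf N w x y = Qf N w y x := by
  unfold Qf
  rw [sum4_swap]
  refine sum4_congr _ _ _ fun i _ j _ k _ l _ => ?_
  have hw : w ((k : ℤ) - (i : ℤ)) ((l : ℤ) - (j : ℤ)) = w ((i : ℤ) - (k : ℤ)) ((j : ℤ) - (l : ℤ)) := by
    rw [show (k : ℤ) - i = -((i : ℤ) - k) by ring, hw1,
        show (l : ℤ) - j = -((j : ℤ) - l) by ring, hw2]
  rw [hw]; ring

lemma Qf_congr (N : ℕ) (w : ℤ → ℤ → ℝ) (x x' y y' : ℕ → ℕ → ℝ)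
    (h1 : ∀ i j, 1 ≤ i → i ≤ N → 1 ≤ j → j ≤ N → x i j = x' i j)
    (h2 : ∀ i j, 1 ≤ i → i ≤ N → 1 ≤ j → j ≤ N → y i j = y' i j) :
    Qf N w x y = Qf N w x' y' := by
  unfold Qf
  refine sum4_congr _ _ _ fun i hi j hj k hk l hl => ?_
  rw [Finset.mem_Icc] at hi hj hk hl
  rw [h1 i j hi.1 hi.2 hj.1 hj.2, h2 k l hk.1 hk.2 hl.1 hl.2]

lemma Qf_linear_right (N : ℕ) (w : ℤ → ℤ → ℝ) (x y z : ℕ → ℕ → ℝ) (c1 c2 : ℝ) :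
    Qf N w x (fun k l => c1 * y k l + c2 * z k l) = c1 * Qf N w x y + c2 * Qf N w x z := by
  unfold Qf
  simp only [Finset.mul_sum, ← Finset.sum_add_distrib]
  refine sum4_congr _ _ _ fun i _ j _ k _ l _ => ?_
  ring

lemma Qf_rowsum (N : ℕ) (w : ℤ → ℤ → ℝ) (x y : ℕ → ℕ → ℝ) :
    Qf N w x y = ∑ i ∈ Finset.Icc 1 N, ∑ j ∈ Finset.Icc 1 N,
      x i j * ∑ k ∈ Finset.Icc 1 N, ∑ l ∈ Finset.Icc 1 N,
        w ((i : ℤ) - (k : ℤ)) ((j : ℤ) - (l : ℤ)) * y k l := by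
  unfold Qf
  simp only [Finset.mul_sum]
  refine sum4_congr _ _ _ fun i _ j _ k _ l _ => ?_
  ring
lemma stage_dissip (N : ℕ) (hN : 2 ≤ N) (dx dy dt : ℝ)
    (hdx : 0 < dx) (hdy : 0 < dy) (hdt : 0 < dt)
    (H : ℝ → ℝ) (hHconv : ConvexOn ℝ Set.univ H) (hHdiff : Differentiable ℝ H)
    (V : ℕ → ℕ → ℝ) (w : ℤ → ℤ → ℝ)
    (hw1 : ∀ p q : ℤ, w (-p) q = w p q) (hw2 : ∀ p q : ℤ, w p (-q) = w p q)
    (r : ℕ) (hr1 : 1 ≤ r) (hrN : r ≤ N)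
    (b a hat : ℕ → ℕ → ℝ) (ξ : ℕ → ℕ → ℝ) (u F : ℕ → ℝ)
    (hb : ∀ i j, 1 ≤ i → i ≤ N → 1 ≤ j → j ≤ N → 0 ≤ b i j)
    (hkeep : ∀ i j, 1 ≤ i → i ≤ N → 1 ≤ j → j ≤ N → j ≠ r → a i j = b i j)
    (hξ : ∀ i, 1 ≤ i → i ≤ N →
      ξ i r = deriv H (a i r) + V i r
        + dx * dy * ∑ k ∈ Finset.Icc 1 N, ∑ l ∈ Finset.Icc 1 N,
            w ((i : ℤ) - (k : ℤ)) ((r : ℤ) - (l : ℤ))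
              * (if l = r then hat k l else b k l))
    (hu : ∀ i, 1 ≤ i → i ≤ N - 1 → u i = -(ξ (i + 1) r - ξ i r) / dx)
    (hFx : ∀ i, 1 ≤ i → i ≤ N - 1 →
      F i = a i r * pospart (u i) + a (i + 1) r * negpart (u i))
    (hF0 : F 0 = 0) (hFN : F N = 0)
    (hupd : ∀ i, 1 ≤ i → i ≤ N → a i r = b i r - dt / dx * (F i - F (i - 1)))
    (hcase : (∀ k l, 1 ≤ k → k ≤ N → 1 ≤ l → l ≤ N → hat k l = (a k l + b k l) / 2) ∨
      ((∀ k l, 1 ≤ k → k ≤ N → 1 ≤ l → l ≤ N → hat k l = b k l) ∧ NegDefKer2 N w) ∨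
      ((∀ k l, 1 ≤ k → k ≤ N → 1 ≤ l → l ≤ N → hat k l = a k l) ∧ PosDefKer2 N w)) :
    (∀ i j, 1 ≤ i → i ≤ N → 1 ≤ j → j ≤ N → 0 ≤ a i j) ∧
    Edisc2 N dx dy H V w a ≤ Edisc2 N dx dy H V w b := by
  classical
  have ha : ∀ i j, 1 ≤ i → i ≤ N → 1 ≤ j → j ≤ N → 0 ≤ a i j := by
    intro i j h1 h2 h3 h4
    by_cases hj : j = r
    · rw [hj]
      exact row_nonneg N (by omega) (dt / dx) (div_nonneg hdt.le hdx.le)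
        (fun i => a i r) (fun i => b i r) u F
        (fun i hi1 hi2 => hb i r hi1 hi2 hr1 hrN) hFx hF0 hFN hupd i h1 h2
    · rw [hkeep i j h1 h2 h3 h4 hj]; exact hb i j h1 h2 h3 h4
  refine ⟨ha, ?_⟩
  have hrIc : r ∈ Finset.Icc 1 N := Finset.mem_Icc.2 ⟨hr1, hrN⟩
  -- abbreviations
  let d : ℕ → ℕ → ℝ := fun i j => a i j - b i j
  let c : ℕ → ℕ → ℝ := fun k l => if l = r then hat k l else b k l
  have hd0 : ∀ i j, 1 ≤ i → i ≤ N → 1 ≤ j → j ≤ N → j ≠ r → d i j = 0 := by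
    intro i j h1 h2 h3 h4 hne
    show a i j - b i j = 0
    rw [hkeep i j h1 h2 h3 h4 hne]; ring
  -- quadratic decomposition
  have hQab : Qf N w a a - Qf N w b b = Qf N w d a + Qf N w d b := by
    have h1 : Qf N w b d = Qf N w d b := Qf_symm N w hw1 hw2 b d
    have h2 : Qf N w a a - Qf N w b b = Qf N w d a + Qf N w b d := by
      unfold Qf
      simp only [← Finset.sum_add_distrib, ← Finset.sum_sub_distrib]
      refine sum4_congr _ _ _ fun i _ j _ k _ l _ => ?_
      show _ = w _ _ * (a i j - b i j) * a k l + w _ _ * b i j * (a k l - b k l)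
      ring
    rw [h2, h1]
  have hQdd : Qf N w d d = ∑ i ∈ Finset.Icc 1 N, ∑ j ∈ Finset.Icc 1 N,
      ∑ k ∈ Finset.Icc 1 N, ∑ l ∈ Finset.Icc 1 N,
        w ((i : ℤ) - (k : ℤ)) ((j : ℤ) - (l : ℤ))
          * (a i j - b i j) * (a k l - b k l) := rfl
  have hQ : Qf N w a a - Qf N w b b ≤ 2 * Qf N w d c := by
    rcases hcase with hI | ⟨hII, hneg⟩ | ⟨hIII, hpos⟩
    · have hcc : Qf N w d c
          = Qf N w d (fun k l => (1/2 : ℝ) * a k l + (1/2 : ℝ) * b k l) := by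
        refine Qf_congr N w d d _ _ (fun _ _ _ _ _ _ => rfl) ?_
        intro k l h1 h2 h3 h4
        show (if l = r then hat k l else b k l) = _
        by_cases hl : l = r
        · rw [if_pos hl, hI k l h1 h2 h3 h4]; ring
        · rw [if_neg hl, hkeep k l h1 h2 h3 h4 hl]; ring
      rw [hQab, hcc, Qf_linear_right]
      linarith
    · have hcc : Qf N w d c = Qf N w d b := by
        refine Qf_congr N w d d _ _ (fun _ _ _ _ _ _ => rfl) ?_
        intro k l h1 h2 h3 h4
        show (if l = r then hat k l else b k l) = b k l
        by_cases hl : l = r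
        · rw [if_pos hl, hII k l h1 h2 h3 h4]
        · rw [if_neg hl]
      have hda : Qf N w d a = Qf N w d d + Qf N w d b := by
        have : Qf N w d a = Qf N w d (fun k l => (1:ℝ) * d k l + (1:ℝ) * b k l) := by
          refine Qf_congr N w d d _ _ (fun _ _ _ _ _ _ => rfl) ?_
          intro k l _ _ _ _
          show a k l = 1 * (a k l - b k l) + 1 * b k l
          ring
        rw [this, Qf_linear_right]; ring
      have hnn : Qf N w d d ≤ 0 := by rw [hQdd]; exact hneg a b ha hb
      rw [hQab, hcc, hda]; linarith
    · have hcc : Qf N w d c = Qf N w d a := by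
        refine Qf_congr N w d d _ _ (fun _ _ _ _ _ _ => rfl) ?_
        intro k l h1 h2 h3 h4
        show (if l = r then hat k l else b k l) = a k l
        by_cases hl : l = r
        · rw [if_pos hl, hIII k l h1 h2 h3 h4]
        · rw [if_neg hl, hkeep k l h1 h2 h3 h4 hl]
      have hdb : Qf N w d b = Qf N w d a - Qf N w d d := by
        have : Qf N w d b = Qf N w d (fun k l => (1:ℝ) * a k l + (-1:ℝ) * d k l) := by
          refine Qf_congr N w d d _ _ (fun _ _ _ _ _ _ => rfl) ?_
          intro k l _ _ _ _
          show b k l = 1 * a k l + (-1) * (a k l - b k l)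
          ring
        rw [this, Qf_linear_right]; ring
      have hnn : 0 ≤ Qf N w d d := by rw [hQdd]; exact hpos a b ha hb
      rw [hQab, hcc, hdb]; linarith
  -- convexity estimate
  have hT1 : (∑ i ∈ Finset.Icc 1 N, ∑ j ∈ Finset.Icc 1 N, H (a i j))
      - (∑ i ∈ Finset.Icc 1 N, ∑ j ∈ Finset.Icc 1 N, H (b i j))
      ≤ ∑ i ∈ Finset.Icc 1 N, ∑ j ∈ Finset.Icc 1 N, deriv H (a i j) * d i j := by
    simp only [← Finset.sum_sub_distrib]
    refine Finset.sum_le_sum fun i _ => Finset.sum_le_sum fun j _ => ?_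
    exact convex_tangent H hHconv hHdiff (a i j) (b i j)
  -- potential term
  have hT2 : (∑ i ∈ Finset.Icc 1 N, ∑ j ∈ Finset.Icc 1 N, V i j * a i j)
      - (∑ i ∈ Finset.Icc 1 N, ∑ j ∈ Finset.Icc 1 N, V i j * b i j)
      = ∑ i ∈ Finset.Icc 1 N, ∑ j ∈ Finset.Icc 1 N, V i j * d i j := by
    simp only [← Finset.sum_sub_distrib]
    refine sum2_congr _ _ _ fun i _ j _ => ?_
    show _ = V i j * (a i j - b i j)
    ring
  -- the key sum collapses to the active row
  have hξ' : ∀ i, 1 ≤ i → i ≤ N →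
      ξ i r = deriv H (a i r) + V i r
        + dx * dy * ∑ k ∈ Finset.Icc 1 N, ∑ l ∈ Finset.Icc 1 N,
            w ((i : ℤ) - (k : ℤ)) ((r : ℤ) - (l : ℤ)) * c k l := hξ
  have hkey : (∑ i ∈ Finset.Icc 1 N, ∑ j ∈ Finset.Icc 1 N, deriv H (a i j) * d i j)
      + (∑ i ∈ Finset.Icc 1 N, ∑ j ∈ Finset.Icc 1 N, V i j * d i j)
      + dx * dy * Qf N w d c
      = ∑ i ∈ Finset.Icc 1 N, d i r * ξ i r := by
    have hZ : dx * dy * Qf N w d c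
        = ∑ i ∈ Finset.Icc 1 N, ∑ j ∈ Finset.Icc 1 N,
            d i j * (dx * dy * ∑ k ∈ Finset.Icc 1 N, ∑ l ∈ Finset.Icc 1 N,
              w ((i : ℤ) - (k : ℤ)) ((j : ℤ) - (l : ℤ)) * c k l) := by
      rw [Qf_rowsum, Finset.mul_sum]
      refine Finset.sum_congr rfl fun i _ => ?_
      rw [Finset.mul_sum]
      refine Finset.sum_congr rfl fun j _ => ?_
      ring
    rw [hZ]
    simp only [← Finset.sum_add_distrib]
    refine Finset.sum_congr rfl fun i hi => ?_
    rw [Finset.mem_Icc] at hi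
    rw [Finset.sum_eq_single_of_mem r hrIc ?side]
    case side =>
      intro j hj hne
      rw [Finset.mem_Icc] at hj
      rw [hd0 i j hi.1 hi.2 hj.1 hj.2 hne]
      ring
    rw [hξ' i hi.1 hi.2]
    ring
  -- evaluate the row sum
  have hrow : ∑ i ∈ Finset.Icc 1 N, d i r * ξ i r ≤ 0 := by
    have h1 : ∑ i ∈ Finset.Icc 1 N, d i r * ξ i r
        = -(dt / dx) * ∑ i ∈ Finset.Icc 1 N, (fun i => ξ i r) i * (F i - F (i - 1)) := by
      rw [Finset.mul_sum]
      refine Finset.sum_congr rfl fun i hi => ?_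
      rw [Finset.mem_Icc] at hi
      have : d i r = -(dt / dx) * (F i - F (i - 1)) := by
        show a i r - b i r = _
        rw [hupd i hi.1 hi.2]; ring
      rw [this]; ring
    rw [h1, abel_Icc (fun i => ξ i r) F N (by omega), hF0, hFN]
    have h2 : ∑ i ∈ Finset.Icc 1 (N - 1), (ξ i r - ξ (i + 1) r) * F i
        = ∑ i ∈ Finset.Icc 1 (N - 1), (dx * u i) * F i := by
      refine Finset.sum_congr rfl fun i hi => ?_
      rw [Finset.mem_Icc] at hi
      rw [hu i hi.1 hi.2]
      field_simp
      ring
    rw [h2]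
    have h3 : 0 ≤ ∑ i ∈ Finset.Icc 1 (N - 1), (dx * u i) * F i := by
      refine Finset.sum_nonneg fun i hi => ?_
      rw [Finset.mem_Icc] at hi
      rw [hFx i hi.1 hi.2]
      have e : dx * u i * (a i r * pospart (u i) + a (i + 1) r * negpart (u i))
          = dx * (a i r * (pospart (u i) * u i) + a (i + 1) r * (negpart (u i) * u i)) := by
        ring
      rw [e, pospart_mul_self, negpart_mul_self]
      have ha1 : 0 ≤ a i r := ha i r hi.1 (by omega) hr1 hrN
      have ha2 : 0 ≤ a (i + 1) r := ha (i + 1) r (by omega) (by omega) hr1 hrN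
      have := mul_self_nonneg (pospart (u i))
      have := mul_self_nonneg (negpart (u i))
      positivity
    have hl : 0 ≤ dt / dx := div_nonneg hdt.le hdx.le
    nlinarith
  -- assemble
  have e1 : Edisc2 N dx dy H V w a
      = dx * dy * ((∑ i ∈ Finset.Icc 1 N, ∑ j ∈ Finset.Icc 1 N, H (a i j))
        + (∑ i ∈ Finset.Icc 1 N, ∑ j ∈ Finset.Icc 1 N, V i j * a i j)
        + dx * dy / 2 * Qf N w a a) := rfl
  have e2 : Edisc2 N dx dy H V w b
      = dx * dy * ((∑ i ∈ Finset.Icc 1 N, ∑ j ∈ Finset.Icc 1 N, H (b i j))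
        + (∑ i ∈ Finset.Icc 1 N, ∑ j ∈ Finset.Icc 1 N, V i j * b i j)
        + dx * dy / 2 * Qf N w b b) := rfl
  rw [e1, e2, ← sub_nonpos, ← mul_sub]
  have hsum : ((∑ i ∈ Finset.Icc 1 N, ∑ j ∈ Finset.Icc 1 N, H (a i j))
        + (∑ i ∈ Finset.Icc 1 N, ∑ j ∈ Finset.Icc 1 N, V i j * a i j)
        + dx * dy / 2 * Qf N w a a)
      - ((∑ i ∈ Finset.Icc 1 N, ∑ j ∈ Finset.Icc 1 N, H (b i j))
        + (∑ i ∈ Finset.Icc 1 N, ∑ j ∈ Finset.Icc 1 N, V i j * b i j)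
        + dx * dy / 2 * Qf N w b b) ≤ 0 := by
    have hh : dx * dy / 2 * (Qf N w a a - Qf N w b b) ≤ dx * dy * Qf N w d c := by
      have := mul_le_mul_of_nonneg_left hQ (by positivity : (0:ℝ) ≤ dx * dy / 2)
      linarith
    linarith [hT1, hkey, hrow, hh, hT2.le, hT2.ge]
  exact mul_nonpos_of_nonneg_of_nonpos (by positivity) hsum

lemma Edisc2_congr (N : ℕ) (dx dy : ℝ) (H : ℝ → ℝ) (V : ℕ → ℕ → ℝ) (w : ℤ → ℤ → ℝ)
    (ρ σ : ℕ → ℕ → ℝ) (h : ∀ i j, 1 ≤ i → i ≤ N → 1 ≤ j → j ≤ N → ρ i j = σ i j) :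
    Edisc2 N dx dy H V w ρ = Edisc2 N dx dy H V w σ := by
  have h' : ∀ i ∈ Finset.Icc 1 N, ∀ j ∈ Finset.Icc 1 N, ρ i j = σ i j := by
    intro i hi j hj
    rw [Finset.mem_Icc] at hi hj
    exact h i j hi.1 hi.2 hj.1 hj.2
  unfold Edisc2
  have e1 : ∑ i ∈ Finset.Icc 1 N, ∑ j ∈ Finset.Icc 1 N, H (ρ i j)
      = ∑ i ∈ Finset.Icc 1 N, ∑ j ∈ Finset.Icc 1 N, H (σ i j) :=
    sum2_congr _ _ _ fun i hi j hj => by rw [h' i hi j hj]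
  have e2 : ∑ i ∈ Finset.Icc 1 N, ∑ j ∈ Finset.Icc 1 N, V i j * ρ i j
      = ∑ i ∈ Finset.Icc 1 N, ∑ j ∈ Finset.Icc 1 N, V i j * σ i j :=
    sum2_congr _ _ _ fun i hi j hj => by rw [h' i hi j hj]
  have e3 : ∑ i ∈ Finset.Icc 1 N, ∑ j ∈ Finset.Icc 1 N,
        ∑ k ∈ Finset.Icc 1 N, ∑ l ∈ Finset.Icc 1 N,
          w ((i : ℤ) - (k : ℤ)) ((j : ℤ) - (l : ℤ)) * ρ i j * ρ k l
      = ∑ i ∈ Finset.Icc 1 N, ∑ j ∈ Finset.Icc 1 N,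
        ∑ k ∈ Finset.Icc 1 N, ∑ l ∈ Finset.Icc 1 N,
          w ((i : ℤ) - (k : ℤ)) ((j : ℤ) - (l : ℤ)) * σ i j * σ k l :=
    sum4_congr _ _ _ fun i hi j hj k hk l hl => by rw [h' i hi j hj, h' k hk l hl]
  rw [e1, e2, e3]

lemma Edisc2_transpose (N : ℕ) (dx dy : ℝ) (H : ℝ → ℝ) (V : ℕ → ℕ → ℝ)
    (w : ℤ → ℤ → ℝ) (ρ : ℕ → ℕ → ℝ) :
    Edisc2 N dy dx H (fun i j => V j i) (fun p q => w q p) (fun i j => ρ j i)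
      = Edisc2 N dx dy H V w ρ := by
  unfold Edisc2
  have e1 : ∑ i ∈ Finset.Icc 1 N, ∑ j ∈ Finset.Icc 1 N, H (ρ j i)
      = ∑ i ∈ Finset.Icc 1 N, ∑ j ∈ Finset.Icc 1 N, H (ρ i j) := Finset.sum_comm
  have e2 : ∑ i ∈ Finset.Icc 1 N, ∑ j ∈ Finset.Icc 1 N, V j i * ρ j i
      = ∑ i ∈ Finset.Icc 1 N, ∑ j ∈ Finset.Icc 1 N, V i j * ρ i j := Finset.sum_comm
  have e3 : ∑ i ∈ Finset.Icc 1 N, ∑ j ∈ Finset.Icc 1 N,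
        ∑ k ∈ Finset.Icc 1 N, ∑ l ∈ Finset.Icc 1 N,
          w ((j : ℤ) - (l : ℤ)) ((i : ℤ) - (k : ℤ)) * ρ j i * ρ l k
      = ∑ i ∈ Finset.Icc 1 N, ∑ j ∈ Finset.Icc 1 N,
        ∑ k ∈ Finset.Icc 1 N, ∑ l ∈ Finset.Icc 1 N,
          w ((i : ℤ) - (k : ℤ)) ((j : ℤ) - (l : ℤ)) * ρ i j * ρ k l :=
    sum4_pairswap _ _
  rw [e1, e2, e3]
  ring

lemma NegDefKer2_transpose {N : ℕ} {w : ℤ → ℤ → ℝ} (h : NegDefKer2 N w) :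
    NegDefKer2 N (fun p q => w q p) := by
  intro a b ha hb
  have h2 := h (fun i j => a j i) (fun i j => b j i)
    (fun i j h1 h2 h3 h4 => ha j i h3 h4 h1 h2) (fun i j h1 h2 h3 h4 => hb j i h3 h4 h1 h2)
  refine le_of_eq_of_le ?_ h2
  exact (sum4_pairswap (Finset.Icc 1 N)
    (fun i j k l => w ((i : ℤ) - (k : ℤ)) ((j : ℤ) - (l : ℤ))
      * (a j i - b j i) * (a l k - b l k))).symm

lemma PosDefKer2_transpose {N : ℕ} {w : ℤ → ℤ → ℝ} (h : PosDefKer2 N w) :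
    PosDefKer2 N (fun p q => w q p) := by
  intro a b ha hb
  have h2 := h (fun i j => a j i) (fun i j => b j i)
    (fun i j h1 h2 h3 h4 => ha j i h3 h4 h1 h2) (fun i j h1 h2 h3 h4 => hb j i h3 h4 h1 h2)
  refine le_of_le_of_eq h2 ?_
  exact sum4_pairswap (Finset.Icc 1 N)
    (fun i j k l => w ((i : ℤ) - (k : ℤ)) ((j : ℤ) - (l : ℤ))
      * (a j i - b j i) * (a l k - b l k))

/-- unconditional energy dissipation for the sweeping dimensional
splitting scheme S2.  `ρx r` is the `r`-th stage of the x-sweep (only row `r` is updated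
at stage `r`, implicitly), `ρy r` the `r`-th stage of the y-sweep, `ρⁿ = ρx 0`,
`ρ^{n+1/2} = ρx N = ρy 0`, and `ρⁿ⁺¹ = ρy N`.  The convolution variable at stage `r`
equals `ρss r` (resp. `ρsss r`) on the active row (resp. column) and the previous
iterate elsewhere.  If `ρⁿ` is nonnegative, the discrete energy decreases at every
individual stage of both sweeps, and in particular `E_Δ(ρⁿ⁺¹) ≤ E_Δ(ρⁿ)`, with no CFL
restriction. -/
theorem stmt_17 (N : ℕ) (hN : 2 ≤ N) (dx dy dt : ℝ)
    (hdx : 0 < dx) (hdy : 0 < dy) (hdt : 0 < dt)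
    (H : ℝ → ℝ) (hHconv : ConvexOn ℝ Set.univ H) (hHdiff : Differentiable ℝ H)
    (V : ℕ → ℕ → ℝ) (w : ℤ → ℤ → ℝ)
    (hw1 : ∀ p q : ℤ, w (-p) q = w p q) (hw2 : ∀ p q : ℤ, w p (-q) = w p q)
    (ρx ρy ρss ρsss ξx ξy : ℕ → ℕ → ℕ → ℝ) (u v F G : ℕ → ℕ → ℝ)
    (hlink : ∀ i j, 1 ≤ i → i ≤ N → 1 ≤ j → j ≤ N → ρy 0 i j = ρx N i j)
    -- x-sweep: at stage r only row j = r is updated, implicitly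
    (hkeepx : ∀ r, 1 ≤ r → r ≤ N → ∀ i j, 1 ≤ i → i ≤ N → 1 ≤ j → j ≤ N → j ≠ r →
      ρx r i j = ρx (r - 1) i j)
    (hξx : ∀ r, 1 ≤ r → r ≤ N → ∀ i j, 1 ≤ i → i ≤ N → 1 ≤ j → j ≤ N →
      ξx r i j = deriv H (ρx r i j) + V i j
        + dx * dy * ∑ k ∈ Finset.Icc 1 N, ∑ l ∈ Finset.Icc 1 N,
            w ((i : ℤ) - (k : ℤ)) ((j : ℤ) - (l : ℤ))
              * (if l = r then ρss r k l else ρx (r - 1) k l))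
    (hu : ∀ r, 1 ≤ r → r ≤ N → ∀ i, 1 ≤ i → i ≤ N - 1 →
      u r i = -(ξx r (i + 1) r - ξx r i r) / dx)
    (hFx : ∀ r, 1 ≤ r → r ≤ N → ∀ i, 1 ≤ i → i ≤ N - 1 →
      F r i = ρx r i r * pospart (u r i) + ρx r (i + 1) r * negpart (u r i))
    (hF0 : ∀ r, 1 ≤ r → r ≤ N → F r 0 = 0)
    (hFN : ∀ r, 1 ≤ r → r ≤ N → F r N = 0)
    (hupdx : ∀ r, 1 ≤ r → r ≤ N → ∀ i, 1 ≤ i → i ≤ N →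
      ρx r i r = ρx (r - 1) i r - dt / dx * (F r i - F r (i - 1)))
    -- y-sweep: at stage r only column i = r is updated, implicitly
    (hkeepy : ∀ r, 1 ≤ r → r ≤ N → ∀ i j, 1 ≤ i → i ≤ N → 1 ≤ j → j ≤ N → i ≠ r →
      ρy r i j = ρy (r - 1) i j)
    (hξy : ∀ r, 1 ≤ r → r ≤ N → ∀ i j, 1 ≤ i → i ≤ N → 1 ≤ j → j ≤ N →
      ξy r i j = deriv H (ρy r i j) + V i j
        + dx * dy * ∑ k ∈ Finset.Icc 1 N, ∑ l ∈ Finset.Icc 1 N,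
            w ((i : ℤ) - (k : ℤ)) ((j : ℤ) - (l : ℤ))
              * (if k = r then ρsss r k l else ρy (r - 1) k l))
    (hv : ∀ r, 1 ≤ r → r ≤ N → ∀ j, 1 ≤ j → j ≤ N - 1 →
      v r j = -(ξy r r (j + 1) - ξy r r j) / dy)
    (hGy : ∀ r, 1 ≤ r → r ≤ N → ∀ j, 1 ≤ j → j ≤ N - 1 →
      G r j = ρy r r j * pospart (v r j) + ρy r r (j + 1) * negpart (v r j))
    (hG0 : ∀ r, 1 ≤ r → r ≤ N → G r 0 = 0)
    (hGN : ∀ r, 1 ≤ r → r ≤ N → G r N = 0)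
    (hupdy : ∀ r, 1 ≤ r → r ≤ N → ∀ j, 1 ≤ j → j ≤ N →
      ρy r r j = ρy (r - 1) r j - dt / dy * (G r j - G r (j - 1)))
    -- nonnegative initial datum
    (hpos : ∀ i j, 1 ≤ i → i ≤ N → 1 ≤ j → j ≤ N → 0 ≤ ρx 0 i j)
    -- admissible choice of the convolution variables, possibly different at each stage
    (hcase : ∀ r, 1 ≤ r → r ≤ N →
      ((∀ k l, 1 ≤ k → k ≤ N → 1 ≤ l → l ≤ N →
          ρss r k l = (ρx r k l + ρx (r - 1) k l) / 2) ∧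
        (∀ k l, 1 ≤ k → k ≤ N → 1 ≤ l → l ≤ N →
          ρsss r k l = (ρy r k l + ρy (r - 1) k l) / 2)) ∨
      ((∀ k l, 1 ≤ k → k ≤ N → 1 ≤ l → l ≤ N → ρss r k l = ρx (r - 1) k l) ∧
        (∀ k l, 1 ≤ k → k ≤ N → 1 ≤ l → l ≤ N → ρsss r k l = ρy (r - 1) k l) ∧
        NegDefKer2 N w) ∨
      ((∀ k l, 1 ≤ k → k ≤ N → 1 ≤ l → l ≤ N → ρss r k l = ρx r k l) ∧
        (∀ k l, 1 ≤ k → k ≤ N → 1 ≤ l → l ≤ N → ρsss r k l = ρy r k l) ∧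
        PosDefKer2 N w)) :
    Edisc2 N dx dy H V w (ρy N) ≤ Edisc2 N dx dy H V w (ρx 0) ∧
    (∀ r, 1 ≤ r → r ≤ N →
      Edisc2 N dx dy H V w (ρx r) ≤ Edisc2 N dx dy H V w (ρx (r - 1)) ∧
      Edisc2 N dx dy H V w (ρy r) ≤ Edisc2 N dx dy H V w (ρy (r - 1))) := by
  -- one stage of the x-sweep
  have xstep : ∀ r, 1 ≤ r → r ≤ N →
      (∀ i j, 1 ≤ i → i ≤ N → 1 ≤ j → j ≤ N → 0 ≤ ρx (r - 1) i j) →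
      (∀ i j, 1 ≤ i → i ≤ N → 1 ≤ j → j ≤ N → 0 ≤ ρx r i j) ∧
        Edisc2 N dx dy H V w (ρx r) ≤ Edisc2 N dx dy H V w (ρx (r - 1)) := by
    intro r h1 h2 hbpos
    refine stage_dissip N hN dx dy dt hdx hdy hdt H hHconv hHdiff V w hw1 hw2 r h1 h2
      (ρx (r - 1)) (ρx r) (ρss r) (ξx r) (u r) (F r) hbpos
      (hkeepx r h1 h2) (fun i hi1 hi2 => hξx r h1 h2 i r hi1 hi2 h1 h2)
      (hu r h1 h2) (hFx r h1 h2) (hF0 r h1 h2) (hFN r h1 h2) (hupdx r h1 h2) ?_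
    rcases hcase r h1 h2 with ⟨hA, _⟩ | ⟨hA, _, hk⟩ | ⟨hA, _, hk⟩
    · exact Or.inl hA
    · exact Or.inr (Or.inl ⟨hA, hk⟩)
    · exact Or.inr (Or.inr ⟨hA, hk⟩)
  -- one stage of the y-sweep
  have ystep : ∀ r, 1 ≤ r → r ≤ N →
      (∀ i j, 1 ≤ i → i ≤ N → 1 ≤ j → j ≤ N → 0 ≤ ρy (r - 1) i j) →
      (∀ i j, 1 ≤ i → i ≤ N → 1 ≤ j → j ≤ N → 0 ≤ ρy r i j) ∧
        Edisc2 N dx dy H V w (ρy r) ≤ Edisc2 N dx dy H V w (ρy (r - 1)) := by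
    intro r h1 h2 hbpos
    have hξ' : ∀ i, 1 ≤ i → i ≤ N →
        ξy r r i = deriv H (ρy r r i) + V r i
          + dy * dx * ∑ k ∈ Finset.Icc 1 N, ∑ l ∈ Finset.Icc 1 N,
              w ((r : ℤ) - (l : ℤ)) ((i : ℤ) - (k : ℤ))
                * (if l = r then ρsss r l k else ρy (r - 1) l k) := by
      intro i hi1 hi2
      rw [hξy r h1 h2 r i h1 h2 hi1 hi2, mul_comm dy dx]
      congr 1
      congr 1
      exact Finset.sum_comm (s := Finset.Icc 1 N) (t := Finset.Icc 1 N)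
        (f := fun x y => w ((r : ℤ) - (x : ℤ)) ((i : ℤ) - (y : ℤ))
          * (if x = r then ρsss r x y else ρy (r - 1) x y))
    have main := stage_dissip N hN dy dx dt hdy hdx hdt H hHconv hHdiff
      (fun i j => V j i) (fun p q => w q p)
      (fun p q => hw2 q p) (fun p q => hw1 q p)
      r h1 h2
      (fun i j => ρy (r - 1) j i) (fun i j => ρy r j i) (fun k l => ρsss r l k)
      (fun i j => ξy r j i) (v r) (G r)
      (fun i j hi1 hi2 hj1 hj2 => hbpos j i hj1 hj2 hi1 hi2)
      (fun i j hi1 hi2 hj1 hj2 hne => hkeepy r h1 h2 j i hj1 hj2 hi1 hi2 hne)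
      hξ' (hv r h1 h2) (hGy r h1 h2) (hG0 r h1 h2) (hGN r h1 h2) (hupdy r h1 h2) ?_
    · refine ⟨fun i j hi1 hi2 hj1 hj2 => main.1 j i hj1 hj2 hi1 hi2, ?_⟩
      have h3 := main.2
      rw [Edisc2_transpose N dx dy H V w (ρy r),
          Edisc2_transpose N dx dy H V w (ρy (r - 1))] at h3
      exact h3
    · rcases hcase r h1 h2 with ⟨_, hA⟩ | ⟨_, hA, hk⟩ | ⟨_, hA, hk⟩
      · exact Or.inl fun k l hk1 hk2 hl1 hl2 => hA l k hl1 hl2 hk1 hk2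
      · exact Or.inr (Or.inl ⟨fun k l hk1 hk2 hl1 hl2 => hA l k hl1 hl2 hk1 hk2,
          NegDefKer2_transpose hk⟩)
      · exact Or.inr (Or.inr ⟨fun k l hk1 hk2 hl1 hl2 => hA l k hl1 hl2 hk1 hk2,
          PosDefKer2_transpose hk⟩)
  -- chain the x-sweep
  have xall : ∀ r, r ≤ N →
      (∀ i j, 1 ≤ i → i ≤ N → 1 ≤ j → j ≤ N → 0 ≤ ρx r i j) ∧
        Edisc2 N dx dy H V w (ρx r) ≤ Edisc2 N dx dy H V w (ρx 0) := by
    intro r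
    induction r with
    | zero => exact fun _ => ⟨hpos, le_refl _⟩
    | succ n ih =>
      intro hn
      have hprev := ih (by omega)
      have hst := xstep (n + 1) (by omega) hn hprev.1
      exact ⟨hst.1, le_trans hst.2 hprev.2⟩
  -- chain the y-sweep
  have ylinkE : Edisc2 N dx dy H V w (ρy 0) = Edisc2 N dx dy H V w (ρx N) :=
    Edisc2_congr N dx dy H V w _ _ hlink
  have yall : ∀ r, r ≤ N →
      (∀ i j, 1 ≤ i → i ≤ N → 1 ≤ j → j ≤ N → 0 ≤ ρy r i j) ∧
        Edisc2 N dx dy H V w (ρy r) ≤ Edisc2 N dx dy H V w (ρy 0) := by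
    intro r
    induction r with
    | zero =>
      exact fun _ => ⟨fun i j h1 h2 h3 h4 => by
        rw [hlink i j h1 h2 h3 h4]; exact (xall N (le_refl N)).1 i j h1 h2 h3 h4,
        le_refl _⟩
    | succ n ih =>
      intro hn
      have hprev := ih (by omega)
      have hst := ystep (n + 1) (by omega) hn hprev.1
      exact ⟨hst.1, le_trans hst.2 hprev.2⟩
  constructor
  · calc Edisc2 N dx dy H V w (ρy N) ≤ Edisc2 N dx dy H V w (ρy 0) := (yall N (le_refl N)).2
      _ = Edisc2 N dx dy H V w (ρx N) := ylinkE
      _ ≤ Edisc2 N dx dy H V w (ρx 0) := (xall N (le_refl N)).2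
  · intro r h1 h2
    exact ⟨(xstep r h1 h2 (xall (r - 1) (by omega)).1).2,
      (ystep r h1 h2 (yall (r - 1) (by omega)).1).2⟩
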